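/- Let c, d be integers and x > 0 a real constant. With n = n(r) = ⌊r²/(2x)⌋, the binomial coefficient satisfies C(n − c − r·d, r) = (n^r / r!)·e^{−(2d+1)x}·(1 + o(1)) as r → ∞. -/

import Mathlib

open Filter Finset

lemma st18_exp_le (t : ℝ) (ht : |t| ≤ 1/2) : Real.exp (-t - 2*t^2) ≤ 1 - t := by
  have h1 : |t| < 1 := lt_of_le_of_lt ht (by norm_num)
  have h2 := Real.abs_log_sub_add_sum_range_le h1 1
  simp [Finset.sum_range_one] at h2
  have habs := abs_le.1 ht
  have h3 : t^2 / (1 - |t|) ≤ 2*t^2 := by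
    rw [div_le_iff₀ (by linarith)]
    nlinarith [sq_abs t, abs_nonneg t, sq_nonneg t]
  have h4 : -t - 2*t^2 ≤ Real.log (1 - t) := by
    have h5 := (abs_le.1 h2).1
    linarith
  calc Real.exp (-t - 2*t^2) ≤ Real.exp (Real.log (1 - t)) := Real.exp_le_exp.2 h4
    _ = 1 - t := Real.exp_log (by linarith)

lemma st18_sum_id (r : ℕ) : ∑ i ∈ Finset.range r, (i:ℝ) = r*(r-1)/2 := by
  induction r with
  | zero => simp
  | succ n ih => rw [Finset.sum_range_succ, ih]; push_cast; ring

theorem statement18 (c d : ℤ) (x : ℝ) (hx : 0 < x) :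
    Filter.Tendsto
      (fun r : ℕ =>
        ((((⌊(r : ℝ) ^ 2 / (2 * x)⌋₊ : ℤ) - c - r * d).toNat.choose r : ℝ) /
          ((⌊(r : ℝ) ^ 2 / (2 * x)⌋₊ : ℝ) ^ r / (r.factorial : ℝ))))
      Filter.atTop (nhds (Real.exp (-((2 * (d : ℝ) + 1) * x)))) := by
  have hx2 : (0:ℝ) < 2*x := by linarith
  set N : ℕ → ℕ := fun r => ⌊(r:ℝ)^2/(2*x)⌋₊ with hNdef
  set a : ℕ → ℕ → ℝ := fun r i => ((c:ℝ) + r*d + i)/(N r) with hadef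
  set u : ℕ → ℝ := fun r => ((|(c:ℝ)| + r*(|(d:ℝ)|+1)))/(N r) with hudef
  set S : ℕ → ℝ := fun r => ∑ i ∈ range r, a r i with hSdef
  -- floor bounds
  have hNle : ∀ r : ℕ, (N r : ℝ) ≤ (r:ℝ)^2/(2*x) := fun r => Nat.floor_le (by positivity)
  have hNgt : ∀ r : ℕ, (r:ℝ)^2/(2*x) - 1 < N r := fun r => by
    have := Nat.lt_floor_add_one ((r:ℝ)^2/(2*x)); simp only [hNdef]; linarith
  -- r^2 → ∞
  have hr2 : Tendsto (fun r : ℕ => (r:ℝ)^2) atTop atTop :=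
    (tendsto_pow_atTop (two_ne_zero)).comp tendsto_natCast_atTop_atTop
  -- N → ∞ (as reals)
  have hNtop : Tendsto (fun r : ℕ => (N r : ℝ)) atTop atTop := by
    apply tendsto_atTop_mono (fun r => (hNgt r).le)
    have : Tendsto (fun y : ℝ => y/(2*x) - 1) atTop atTop :=
      (tendsto_id.atTop_div_const hx2).atTop_add tendsto_const_nhds
    exact this.comp hr2
  -- N r / r^2 → 1/(2x)
  have hNinv : Tendsto (fun r : ℕ => (N r : ℝ)/(r:ℝ)^2) atTop (nhds (1/(2*x))) := by
    apply tendsto_of_tendsto_of_tendsto_of_le_of_le'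
      (g := fun r : ℕ => 1/(2*x) - 1/(r:ℝ)^2) (h := fun _ => 1/(2*x))
    · have h0 : Tendsto (fun r : ℕ => 1/(r:ℝ)^2) atTop (nhds 0) := by
        have h' : Tendsto (fun r : ℕ => ((r:ℝ)^2)⁻¹) atTop (nhds 0) := hr2.inv_tendsto_atTop; simpa using h'
      simpa using (tendsto_const_nhds.sub h0)
    · exact tendsto_const_nhds
    · filter_upwards [eventually_ge_atTop 1] with r hr
      have hrpos : (0:ℝ) < (r:ℝ)^2 := by positivity
      have heq : 1/(2*x) - 1/(r:ℝ)^2 = ((r:ℝ)^2/(2*x) - 1)/(r:ℝ)^2 := by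
        field_simp
      rw [heq]
      gcongr
      exact (hNgt r).le
    · filter_upwards [eventually_ge_atTop 1] with r hr
      have hrpos : (0:ℝ) < (r:ℝ)^2 := by positivity
      rw [div_le_div_iff₀ hrpos hx2]
      have h := hNle r
      rw [le_div_iff₀ hx2] at h
      linarith
  -- f r = r^2 / N r → 2x
  have hf : Tendsto (fun r : ℕ => (r:ℝ)^2/(N r)) atTop (nhds (2*x)) := by
    have h := hNinv.inv₀ (by positivity)
    simp only [one_div, inv_inv] at h
    have : (fun r : ℕ => ((N r : ℝ)/(r:ℝ)^2)⁻¹) = fun r : ℕ => (r:ℝ)^2/(N r) := by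
      funext r; rw [inv_div]
    rwa [this] at h
  -- r / N r → 0
  have hg : Tendsto (fun r : ℕ => (r:ℝ)/(N r)) atTop (nhds 0) := by
    have h := hf.mul (tendsto_one_div_atTop_nhds_zero_nat)
    rw [mul_zero] at h
    apply h.congr'
    filter_upwards [eventually_ge_atTop 1] with r hr
    have hr0 : (r:ℝ) ≠ 0 := Nat.cast_ne_zero.2 (by omega)
    have h2 : (r:ℝ)^2 * (1/(r:ℝ)) = r := by field_simp [pow_two]
    calc (r:ℝ)^2/(N r) * (1/(r:ℝ)) = ((r:ℝ)^2 * (1/(r:ℝ)))/(N r) := by ring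
      _ = (r:ℝ)/(N r) := by rw [h2]
  -- 1 / N r → 0
  have hNzero : Tendsto (fun r : ℕ => 1/(N r:ℝ)) atTop (nhds 0) := by
    have h' : Tendsto (fun r : ℕ => ((N r:ℝ))⁻¹) atTop (nhds 0) := hNtop.inv_tendsto_atTop; simpa using h'
  -- u → 0
  have hu0 : Tendsto u atTop (nhds 0) := by
    have : u = fun r : ℕ => |(c:ℝ)| * (1/(N r:ℝ)) + (|(d:ℝ)|+1) * ((r:ℝ)/(N r)) := by
      funext r; simp only [hudef]; ring
    rw [this]
    simpa using ((tendsto_const_nhds.mul hNzero).add (tendsto_const_nhds.mul hg))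
  -- r * u r → (|d|+1) * 2x
  have hru : Tendsto (fun r : ℕ => (r:ℝ) * u r) atTop (nhds ((|(d:ℝ)|+1) * (2*x))) := by
    have : (fun r : ℕ => (r:ℝ) * u r)
        = fun r : ℕ => |(c:ℝ)| * ((r:ℝ)/(N r:ℝ)) + (|(d:ℝ)|+1) * ((r:ℝ)^2/(N r)) := by
      funext r; simp only [hudef]; ring
    rw [this]
    simpa using ((tendsto_const_nhds.mul hg).add (tendsto_const_nhds.mul hf))
  -- S r → (2d+1)x
  have hS : Tendsto S atTop (nhds ((2*(d:ℝ)+1)*x)) := by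
    have hSeq : S = fun r : ℕ => (c:ℝ) * ((r:ℝ)/(N r)) + (d:ℝ) * ((r:ℝ)^2/(N r))
        + ((r:ℝ)^2/(N r))/2 - ((r:ℝ)/(N r))/2 := by
      funext r
      simp only [hSdef, hadef]
      rw [← Finset.sum_div]
      rw [Finset.sum_add_distrib, Finset.sum_const, st18_sum_id]
      simp only [Finset.card_range, nsmul_eq_mul]
      push_cast
      ring
    rw [hSeq]
    have t1 := hg.const_mul (c:ℝ)
    have t2 := hf.const_mul (d:ℝ)
    have := ((t1.add t2).add (hf.div_const 2)).sub (hg.div_const 2)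
    convert this using 1
    ring
  -- r * u r ^2 → 0
  have hru2 : Tendsto (fun r : ℕ => (r:ℝ) * (u r)^2) atTop (nhds 0) := by
    have h := hru.mul hu0
    rw [mul_zero] at h
    apply h.congr
    intro r; ring
  -- eventual key inequality: (c:ℝ) + r*d + r ≤ N r and N r ≥ 1
  have hNge1 : ∀ᶠ r : ℕ in atTop, 1 ≤ N r := by
    have := hNtop.eventually_ge_atTop 1
    filter_upwards [this] with r hr
    exact_mod_cast hr
  have hu12 : ∀ᶠ r : ℕ in atTop, u r ≤ 1/2 := by
    filter_upwards [hu0.eventually (eventually_le_nhds (by norm_num : (0:ℝ) < 1/2))] with r hr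
    exact hr
  have hkey : ∀ᶠ r : ℕ in atTop, (c:ℝ) + r*d + r ≤ N r := by
    filter_upwards [hNge1, hu12] with r h1 h2
    have hNpos : (0:ℝ) < N r := by exact_mod_cast h1
    have : (c:ℝ) + r*d + r ≤ |(c:ℝ)| + r*(|(d:ℝ)|+1) := by
      have h3 : (c:ℝ) ≤ |(c:ℝ)| := le_abs_self _
      have h4 : (d:ℝ) ≤ |(d:ℝ)| := le_abs_self _
      have h5 : (0:ℝ) ≤ r := Nat.cast_nonneg r
      nlinarith
    have h6 : |(c:ℝ)| + r*(|(d:ℝ)|+1) = u r * N r := by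
      simp only [hudef]; field_simp
    have h7 : u r * N r ≤ (1/2) * N r := by
      apply mul_le_mul_of_nonneg_right h2 (le_of_lt hNpos)
    linarith
  -- abs bound on a r i
  have habound : ∀ᶠ r : ℕ in atTop, ∀ i ∈ range r, |a r i| ≤ u r := by
    filter_upwards [hNge1] with r h1 i hi
    have hNpos : (0:ℝ) < N r := by exact_mod_cast h1
    have hir : (i:ℝ) ≤ r := by exact_mod_cast (le_of_lt (Finset.mem_range.1 hi))
    have h8 : |(c:ℝ) + r*d + i| ≤ |(c:ℝ)| + r*(|(d:ℝ)|+1) := by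
      have e1 := abs_add_le ((c:ℝ) + r*d) (i:ℝ)
      have e2 := abs_add_le (c:ℝ) ((r:ℝ)*d)
      rw [abs_mul, abs_of_nonneg (Nat.cast_nonneg r : (0:ℝ) ≤ r)] at e2
      rw [abs_of_nonneg (Nat.cast_nonneg i : (0:ℝ) ≤ i)] at e1
      nlinarith [(Nat.cast_nonneg r : (0:ℝ) ≤ r), abs_nonneg ((d:ℝ))]
    simp only [hadef, hudef, abs_div, abs_of_pos hNpos]
    gcongr
  -- exp limits
  have hexp2 : Tendsto (fun r : ℕ => Real.exp (-S r)) atTop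
      (nhds (Real.exp (-((2*(d:ℝ)+1)*x)))) :=
    (Real.continuous_exp.tendsto _).comp hS.neg
  have hexp1 : Tendsto (fun r : ℕ => Real.exp (-S r - 2*((r:ℝ)*(u r)^2))) atTop
      (nhds (Real.exp (-((2*(d:ℝ)+1)*x)))) := by
    have h := hS.neg.sub (hru2.const_mul 2)
    rw [mul_zero, sub_zero] at h
    exact (Real.continuous_exp.tendsto _).comp h
  -- main eventual identity and bounds
  have hprod : ∀ᶠ r : ℕ in atTop,
      ((((N r : ℤ) - c - r * d).toNat.choose r : ℝ) / ((N r : ℝ) ^ r / (r.factorial : ℝ)))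
        = ∏ i ∈ range r, (1 - a r i)
      ∧ Real.exp (-S r - 2*((r:ℝ)*(u r)^2)) ≤ ∏ i ∈ range r, (1 - a r i)
      ∧ (∏ i ∈ range r, (1 - a r i)) ≤ Real.exp (-S r) := by
    filter_upwards [hNge1, hu12, hkey, habound] with r h1 h2 h3 h4
    have hNpos : (0:ℝ) < N r := by exact_mod_cast h1
    set m : ℕ := ((N r : ℤ) - c - r * d).toNat with hmdef
    have h3' : c + (r:ℤ)*d + r ≤ (N r : ℤ) := by exact_mod_cast h3
    have hr0 : (0:ℤ) ≤ (r:ℤ) := Int.natCast_nonneg r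
    have hge : (r:ℤ) ≤ (N r:ℤ) - c - (r:ℤ)*d := by linarith
    have hm0 : (0:ℤ) ≤ (N r:ℤ) - c - (r:ℤ)*d := le_trans hr0 hge
    have hmint : (m:ℤ) = (N r:ℤ) - c - (r:ℤ)*d := Int.toNat_of_nonneg hm0
    have hmr : r ≤ m := (Int.le_toNat hm0).2 hge
    have hmreal : (m:ℝ) = (N r:ℝ) - (c:ℝ) - (r:ℝ)*(d:ℝ) := by exact_mod_cast congrArg (Int.cast : ℤ → ℝ) hmint
    have hfact : (0:ℝ) < (r.factorial : ℝ) := by exact_mod_cast r.factorial_pos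
    -- step 1 : ratio = descFactorial / N^r
    have e1 : ((m.choose r : ℝ)) / ((N r:ℝ)^r / (r.factorial : ℝ))
        = ((m.descFactorial r : ℝ)) / (N r:ℝ)^r := by
      rw [Nat.descFactorial_eq_factorial_mul_choose]
      push_cast
      rw [div_div_eq_mul_div]
      ring
    -- step 2 : prod form
    have e2 : ((m.descFactorial r : ℝ)) = ∏ i ∈ range r, ((m - i : ℕ) : ℝ) := by
      rw [Nat.descFactorial_eq_prod_range]
      push_cast
      rfl
    have e3 : (∏ i ∈ range r, ((m - i : ℕ) : ℝ)) / (N r:ℝ)^r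
        = ∏ i ∈ range r, (1 - a r i) := by
      rw [show ((N r:ℝ))^r = ∏ _i ∈ range r, (N r:ℝ) by
        rw [Finset.prod_const, Finset.card_range]]
      rw [← Finset.prod_div_distrib]
      apply Finset.prod_congr rfl
      intro i hi
      have hir : i < r := Finset.mem_range.1 hi
      rw [Nat.cast_sub (le_of_lt (lt_of_lt_of_le hir hmr))]
      rw [hmreal]
      simp only [hadef]
      field_simp
      ring
    have heq : ((m.choose r : ℝ)) / ((N r:ℝ)^r / (r.factorial : ℝ))
        = ∏ i ∈ range r, (1 - a r i) := by rw [e1, e2, e3]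
    refine ⟨heq, ?_, ?_⟩
    · -- lower bound
      have hQ : (∑ i ∈ range r, (a r i)^2) ≤ (r:ℝ) * (u r)^2 := by
        calc (∑ i ∈ range r, (a r i)^2) ≤ ∑ _i ∈ range r, (u r)^2 := by
              apply Finset.sum_le_sum
              intro i hi
              have := h4 i hi
              calc (a r i)^2 = |a r i|^2 := (sq_abs _).symm
                _ ≤ (u r)^2 := by
                    apply pow_le_pow_left₀ (abs_nonneg _) this
          _ = (r:ℝ) * (u r)^2 := by rw [Finset.sum_const, Finset.card_range, nsmul_eq_mul]
      have hsum : (∑ i ∈ range r, (-(a r i) - 2*(a r i)^2))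
          = -S r - 2*(∑ i ∈ range r, (a r i)^2) := by
        rw [Finset.sum_sub_distrib, ← Finset.mul_sum, Finset.sum_neg_distrib]
      calc Real.exp (-S r - 2*((r:ℝ)*(u r)^2))
          ≤ Real.exp (-S r - 2*(∑ i ∈ range r, (a r i)^2)) := by
            apply Real.exp_le_exp.2; linarith
        _ = ∏ i ∈ range r, Real.exp (-(a r i) - 2*(a r i)^2) := by
            rw [← hsum, Real.exp_sum]
        _ ≤ ∏ i ∈ range r, (1 - a r i) := by
            apply Finset.prod_le_prod
            · intro i _; exact (Real.exp_pos _).le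
            · intro i hi
              exact st18_exp_le (a r i) (le_trans (h4 i hi) h2)
    · -- upper bound
      calc (∏ i ∈ range r, (1 - a r i)) ≤ ∏ i ∈ range r, Real.exp (-(a r i)) := by
            apply Finset.prod_le_prod
            · intro i hi
              have := (abs_le.1 (le_trans (h4 i hi) h2)).2
              linarith
            · intro i _
              have := Real.add_one_le_exp (-(a r i))
              linarith
        _ = Real.exp (-S r) := by
            rw [← Real.exp_sum, Finset.sum_neg_distrib]
  -- conclude by squeeze
  suffices h : Tendsto (fun r : ℕ =>
      ((((N r : ℤ) - c - r * d).toNat.choose r : ℝ) / ((N r : ℝ) ^ r / (r.factorial : ℝ))))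
      atTop (nhds (Real.exp (-((2 * (d : ℝ) + 1) * x)))) by exact h
  apply tendsto_of_tendsto_of_tendsto_of_le_of_le' hexp1 hexp2
  · filter_upwards [hprod] with r hr
    exact le_of_le_of_eq hr.2.1 hr.1.symm
  · filter_upwards [hprod] with r hr
    exact le_of_eq_of_le hr.1 hr.2.2
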